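/- Let L be a join-semilattice and let Sp(L) be the set of ideals of L topologized so that the sets supp(a) = {I | a ∉ I}, a ∈ L, form a basis of closed sets. For any topological space X and any support datum σ : L → Cl(X) (a map with σ(0) = ∅ and σ(a ∨ b) = σ(a) ∪ σ(b)), there exists a unique continuous map f : X → Sp(L) such that σ(a) = f⁻¹(supp(a)) for all a ∈ L. -/

import Mathlib

/-- `I` is an ideal of the join-semilattice `L`: it contains the bottom element,
is closed under binary joins, and is downward closed. -/
def IsIdeal {L : Type*} [SemilatticeSup L] [OrderBot L] (I : Set L) : Prop :=
  ⊥ ∈ I ∧ (∀ a ∈ I, ∀ b ∈ I, a ⊔ b ∈ I) ∧ ∀ a b : L, a ≤ b → b ∈ I → a ∈ I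

/-- The space `Sp(L)` of ideals of the join-semilattice `L`. -/
def Sp (L : Type*) [SemilatticeSup L] [OrderBot L] := {I : Set L // IsIdeal I}

/-- `supp a = {I ∈ Sp(L) | a ∉ I}`. -/
def supp {L : Type*} [SemilatticeSup L] [OrderBot L] (a : L) : Set (Sp L) :=
  {I : Sp L | a ∉ I.1}

/-- The topology on `Sp(L)` for which the sets `supp a`, `a ∈ L`, form a basis
of closed sets: the open sets are generated by the complements of the `supp a`. -/
instance (L : Type*) [SemilatticeSup L] [OrderBot L] : TopologicalSpace (Sp L) :=
  TopologicalSpace.generateFrom {U : Set (Sp L) | ∃ a : L, U = (supp a)ᶜ}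

theorem stmt3 {L : Type*} [SemilatticeSup L] [OrderBot L]
    {X : Type*} [TopologicalSpace X] (σ : L → Set X)
    (hclosed : ∀ a : L, IsClosed (σ a)) (hbot : σ ⊥ = ∅)
    (hsup : ∀ a b : L, σ (a ⊔ b) = σ a ∪ σ b) :
    ∃! f : X → Sp L, Continuous f ∧ ∀ a : L, σ a = f ⁻¹' supp a := by
  have hmono : ∀ a b : L, a ≤ b → σ a ⊆ σ b := by
    intro a b hab
    have : σ b = σ a ∪ σ b := by rw [← hsup, sup_eq_right.mpr hab]
    rw [this]; exact Set.subset_union_left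
  have hI : ∀ x : X, IsIdeal {a : L | x ∉ σ a} := by
    intro x
    refine ⟨by simp [hbot], ?_, ?_⟩
    · intro a ha b hb
      simp only [Set.mem_setOf_eq, hsup, Set.mem_union]
      tauto
    · intro a b hab hb ha
      exact hb (hmono a b hab ha)
  refine ⟨fun x => ⟨{a | x ∉ σ a}, hI x⟩, ⟨?_, ?_⟩, ?_⟩
  · apply continuous_generateFrom_iff.mpr
    rintro U ⟨a, rfl⟩
    have : (fun x => (⟨{a | x ∉ σ a}, hI x⟩ : Sp L)) ⁻¹' (supp a)ᶜ = (σ a)ᶜ := by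
      ext x
      exact not_not
    refine (congrArg IsOpen this).mpr ?_
    exact (hclosed a).isOpen_compl
  · intro a
    ext x
    simp [supp]
    exact not_not.symm
  · rintro g ⟨-, hg⟩
    funext x
    apply Subtype.ext
    ext a
    have hga := hg a
    simp only [Set.mem_setOf_eq]
    constructor
    · intro hag hx
      have : x ∈ g ⁻¹' supp a := by rw [← hga]; exact hx
      exact this hag
    · intro hx
      have h2 : x ∉ g ⁻¹' supp a := by rw [← hga]; exact hx
      exact not_not.mp h2
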